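/- Let τ_s > 0 and D_s > 0 and define φ: ℝ → ℝ by φ(λ) = τ_s·λ + e^{−λ·D_s}. Then φ has a real root (i.e., there exists λ ∈ ℝ with φ(λ) = 0) if and only if e·D_s ≤ τ_s, where e is Euler's number. -/

import Mathlib

/-- `φ(λ) = τ_s·λ + exp(-λ·D_s)` has a real root iff `e·D_s ≤ τ_s`. -/
theorem stmt7 (τs Ds : ℝ) (hτ : 0 < τs) (hD : 0 < Ds) :
    (∃ lam : ℝ, τs * lam + Real.exp (-lam * Ds) = 0) ↔ Real.exp 1 * Ds ≤ τs := by
  constructor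
  · rintro ⟨lam, hlam⟩
    have hexp : 0 < Real.exp (-lam * Ds) := Real.exp_pos _
    have hl : lam < 0 := by
      by_contra h
      push_neg at h
      nlinarith
    set x : ℝ := -lam * Ds with hx
    have hxpos : 0 < x := by nlinarith
    -- key: exp 1 * x ≤ exp x
    have key : Real.exp 1 * x ≤ Real.exp x := by
      have h1 : x ≤ Real.exp (x - 1) := by
        have := Real.add_one_le_exp (x - 1)
        linarith
      have h2 : Real.exp (x - 1) * Real.exp 1 = Real.exp x := by
        rw [← Real.exp_add]; ring_nf
      nlinarith [Real.exp_pos (1 : ℝ)]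
    have hexpx : Real.exp x = τs * (-lam) := by nlinarith
    have hnl : 0 < -lam := by linarith
    rw [hexpx, hx] at key
    have := (mul_le_mul_iff_of_pos_right hnl).mp (by nlinarith)
    nlinarith
  · intro h
    have hcont : Continuous fun lam : ℝ => τs * lam + Real.exp (-lam * Ds) := by
      continuity
    have hle : (-1 / Ds : ℝ) ≤ 0 := by
      apply div_nonpos_of_nonpos_of_nonneg <;> linarith
    have hivt := intermediate_value_Icc hle (hcont.continuousOn (s := Set.Icc (-1/Ds) 0))
    have h0 : (0 : ℝ) ∈ Set.Icc
        (τs * (-1/Ds) + Real.exp (-(-1/Ds) * Ds))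
        (τs * 0 + Real.exp (-0 * Ds)) := by
      constructor
      · have : -(-1/Ds) * Ds = 1 := by field_simp
        rw [this]
        have : τs * (-1/Ds) = -(τs/Ds) := by ring
        rw [this]
        have hτD : Real.exp 1 ≤ τs / Ds := (le_div_iff₀ hD).mpr (by linarith)
        linarith
      · positivity
    obtain ⟨lam, _, hlam⟩ := hivt h0
    exact ⟨lam, hlam⟩
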